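/- Let F ⊂ ℝ^d be nonempty compact convex, and for each t ∈ [T] let C_t be a map assigning to each history (x_1,…,x_{t−1}) ∈ (ℝ^d)^{t−1} a nonempty subset C_t(x_1,…,x_{t−1}) ⊆ ℝ^d. Let Rel be a real-valued function on finite sequences in ℝ^d of length at most T, and suppose a strategy selects f_t = f_t(x_1,…,x_{t−1}) ∈ F such that for every t ∈ [T] and every history with x_s ∈ C_s(x_1,…,x_{s−1}) for all s < t: sup_{x ∈ C_t(x_1,…,x_{t−1})} [ ⟨f_t, x⟩ + Rel(x_1,…,x_{t−1},x) ] ≤ Rel(x_1,…,x_{t−1}), and suppose moreover Rel(x_1,…,x_T) ≥ − inf_{f∈F} Σ_{t=1}^T ⟨f, x_t⟩ for all such sequences. Then for every sequence with x_t ∈ C_t(x_1,…,x_{t−1}) for all t: Σ_{t=1}^T ⟨f_t, x_t⟩ − inf_{f∈F} Σ_{t=1}^T ⟨f, x_t⟩ ≤ Rel(∅). -/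

import Mathlib

open Finset

/-- **Admissible relaxations bound regret (constrained adversary).**
Histories are lists of adversary moves in `ℝ^d`; a list `L` is valid if each of its
elements lies in the constraint set `C` of the prefix preceding it.  If the strategy
`φ` (playing `φ(history) ∈ F`) certifies the one-step admissibility condition
`sup_{z ∈ C(L)} [⟨φ L, z⟩ + Rel(L ++ [z])] ≤ Rel L` for every valid history of length
`< T`, and `Rel L ≥ − inf_{f∈F} Σ_t ⟨f, L_t⟩` for every valid `L` of length `T`, then
for every valid sequence of length `T` the regret is at most `Rel([])`. -/
theorem stmt_8 {d T : ℕ} (F : Set (Fin d → ℝ)) (hFne : F.Nonempty)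
    (hFconv : Convex ℝ F) (hFcomp : IsCompact F)
    (C : List (Fin d → ℝ) → Set (Fin d → ℝ))
    (Rel : List (Fin d → ℝ) → ℝ)
    (φ : List (Fin d → ℝ) → (Fin d → ℝ))
    (hφF : ∀ L, φ L ∈ F)
    (hCne : ∀ L : List (Fin d → ℝ), L.length < T →
      (∀ i : Fin L.length, L.get i ∈ C (L.take i)) → (C L).Nonempty)
    (hadm : ∀ L : List (Fin d → ℝ), L.length < T →
      (∀ i : Fin L.length, L.get i ∈ C (L.take i)) →
      ∀ z ∈ C L, (∑ j, φ L j * z j) + Rel (L ++ [z]) ≤ Rel L)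
    (hfinal : ∀ L : List (Fin d → ℝ), L.length = T →
      (∀ i : Fin L.length, L.get i ∈ C (L.take i)) →
      Rel L ≥ - sInf ((fun f : Fin d → ℝ =>
        ∑ i : Fin L.length, ∑ j, f j * L.get i j) '' F)) :
    ∀ L : List (Fin d → ℝ), L.length = T →
      (∀ i : Fin L.length, L.get i ∈ C (L.take i)) →
      (∑ i : Fin L.length, ∑ j, φ (L.take i) j * L.get i j)
          - sInf ((fun f : Fin d → ℝ =>
              ∑ i : Fin L.length, ∑ j, f j * L.get i j) '' F)
        ≤ Rel [] := by
  intro L hlen hvalid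
  have key : ∀ n (hn : n ≤ L.length),
      (∑ i : Fin n, ∑ j, φ (L.take i) j * L.get (Fin.castLE hn i) j) + Rel (L.take n)
        ≤ Rel [] := by
    intro n
    induction n with
    | zero => intro hn; simp
    | succ n ih =>
      intro hn
      have hn' : n ≤ L.length := Nat.le_of_succ_le hn
      have hnl : n < L.length := hn
      have hMlen : (L.take n).length = n := List.length_take_of_le hn'
      have hMvalid : ∀ i : Fin (L.take n).length,
          (L.take n).get i ∈ C ((L.take n).take i) := by
        intro i
        have hin : (i : ℕ) < n := by have h := i.2; omega
        have hi : (i : ℕ) < L.length := lt_of_lt_of_le hin hn'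
        have h1 : (L.take n).get i = L.get ⟨i, hi⟩ := by
          simp [List.get_eq_getElem, List.getElem_take]
        have h2 : (L.take n).take i = L.take i := by
          rw [List.take_take]
          congr 1
          exact Nat.min_eq_left (Nat.le_of_lt hin)
        rw [h1, h2]
        exact hvalid ⟨i, hi⟩
      have hz : L.get ⟨n, hnl⟩ ∈ C (L.take n) := hvalid ⟨n, hnl⟩
      have hstep := hadm (L.take n) (by rw [hMlen]; omega) hMvalid (L.get ⟨n, hnl⟩) hz
      have htake : L.take n ++ [L.get ⟨n, hnl⟩] = L.take (n + 1) := by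
        simpa using List.take_concat_get L n hnl
      rw [htake] at hstep
      have hsum : (∑ i : Fin (n+1), ∑ j, φ (L.take i) j * L.get (Fin.castLE hn i) j)
          = (∑ i : Fin n, ∑ j, φ (L.take i) j * L.get (Fin.castLE hn' i) j)
            + ∑ j, φ (L.take n) j * L.get ⟨n, hnl⟩ j := by
        rw [Fin.sum_univ_castSucc]
        congr 1
      rw [hsum]
      have := ih hn'
      linarith
  have hfin := key L.length le_rfl
  rw [List.take_length] at hfin
  have hfin' : (∑ i : Fin L.length, ∑ j, φ (L.take i) j * L.get i j) + Rel L ≤ Rel [] := by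
    convert hfin using 2
    rfl
  have hR := hfinal L hlen hvalid
  linarith
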